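/- arXiv:2302.07073 — 2 statements merged into one kernel-verified Lean document; each statement's English description precedes it below -/
import Mathlib

section
/- There is an absolute constant C > 0 such that for all real x ≥ 2, with c := 1 + 1/log x, for all real T and all complex ρ = β + iγ with 0 ≤ β ≤ 1 and |γ − T| < 1, one has | ∫_{1−c}^{c} x^{σ+iT}/(σ + iT − ρ) dσ | ≤ C·x·log log(2x), where the integral is over the real variable σ ∈ [1−c, c] (interpreted as a contour integral along the horizontal segment from 1−c+iT to c+iT, assuming ρ does not lie on this segment). -/
open Complex

set_option maxHeartbeats 1000000 in
/-- There is an absolute constant `C > 0` such that for all `x ≥ 2` with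
`c = 1 + 1/log x`, all real `T`, and all `ρ = β + iγ` with `0 ≤ β ≤ 1`, `|γ - T| < 1`
and `γ ≠ T` (so that `ρ` is not on the segment), one has
`|∫_{1-c}^{c} x^{σ+iT}/(σ+iT-ρ) dσ| ≤ C x log log 2x`. -/
theorem segment_integral_estimate :
    ∃ C : ℝ, 0 < C ∧
      ∀ x T : ℝ, 2 ≤ x →
        ∀ ρ : ℂ, 0 ≤ ρ.re → ρ.re ≤ 1 → |ρ.im - T| < 1 → ρ.im ≠ T →
          ‖∫ σ in (1 - (1 + 1 / Real.log x))..(1 + 1 / Real.log x),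
              (x : ℂ) ^ ((σ : ℂ) + T * I) / ((σ : ℂ) + T * I - ρ)‖
            ≤ C * x * Real.log (Real.log (2 * x)) := by
  refine ⟨200, by norm_num, ?_⟩
  intro x T hx ρ hβ0 hβ1 _ hγT
  set L : ℝ := Real.log x with hLdef
  have hx0 : (0:ℝ) < x := by linarith
  have hx1 : (1:ℝ) ≤ x := by linarith
  have hxC : (x:ℂ) ≠ 0 := by
    simpa using hx0.ne'
  have hL0 : 0 < L := Real.log_pos (by linarith)
  have hlog2 : (0.6931:ℝ) < Real.log 2 := by
    have := Real.log_two_gt_d9; norm_num at this ⊢; linarith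
  have hL2 : (0.6931:ℝ) ≤ L := le_trans hlog2.le (Real.log_le_log (by norm_num) hx)
  set δ : ℝ := L⁻¹ with hδdef
  have hδ0 : 0 < δ := inv_pos.2 hL0
  set β : ℝ := ρ.re with hβdef
  set f : ℝ → ℂ := fun σ => (x:ℂ) ^ ((σ:ℂ) + T * I) / ((σ:ℂ) + T * I - ρ) with hfdef
  have hDim : ∀ σ : ℝ, ((σ:ℂ) + T * I - ρ).im = T - ρ.im := by intro σ; simp
  have hDre : ∀ σ : ℝ, ((σ:ℂ) + T * I - ρ).re = σ - β := by intro σ; simp [hβdef]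
  have hDne : ∀ σ : ℝ, (σ:ℂ) + T * I - ρ ≠ 0 := by
    intro σ h
    apply hγT
    have h2 := congrArg Complex.im h
    rw [hDim σ] at h2
    simp at h2
    linarith
  have hDslit : ∀ σ : ℝ, (σ:ℂ) + T * I - ρ ∈ slitPlane := by
    intro σ
    refine Or.inr ?_
    rw [hDim]
    intro h; exact hγT (by linarith)
  have hNcont : Continuous fun σ : ℝ => (x:ℂ) ^ ((σ:ℂ) + T * I) := by
    apply continuous_const.cpow (by continuity)
    intro σ
    exact ofReal_mem_slitPlane.2 hx0
  have hDcont : Continuous fun σ : ℝ => (σ:ℂ) + T * I - ρ := by continuity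
  have hcont : Continuous f := hNcont.div hDcont hDne
  have hint : ∀ a b : ℝ, IntervalIntegrable f MeasureTheory.volume a b :=
    fun a b => hcont.intervalIntegrable a b
  have hNnorm : ∀ σ : ℝ, ‖(x:ℂ) ^ ((σ:ℂ) + T * I)‖ = x ^ σ := by
    intro σ
    rw [Complex.norm_cpow_eq_rpow_re_of_pos hx0]
    norm_num
  have hxc : x ^ (1 + δ) = Real.exp 1 * x := by
    rw [Real.rpow_add hx0, Real.rpow_one, Real.rpow_def_of_pos hx0,
      hδdef, ← hLdef, mul_inv_cancel₀ hL0.ne']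
    ring
  have hxσ : ∀ σ : ℝ, σ ≤ 1 + δ → x ^ σ ≤ Real.exp 1 * x := by
    intro σ hσ
    rw [← hxc]
    exact Real.rpow_le_rpow_of_exponent_le hx1 hσ
  have hDlb : ∀ σ : ℝ, |σ - β| ≤ ‖(σ:ℂ) + T * I - ρ‖ := by
    intro σ
    rw [← hDre σ]
    exact Complex.abs_re_le_norm _
  have hE0 : (0:ℝ) < Real.exp 1 := Real.exp_pos 1
  -- far right piece
  have hfar_right : ‖∫ σ in (β+δ)..(1+δ), f σ‖ ≤ Real.exp 1 * x * Real.log (L + 1) := by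
      have hab : β + δ ≤ 1 + δ := by linarith
      set g : ℝ → ℝ := fun σ => Real.exp 1 * x * (σ - β)⁻¹ with hgdef
      have hgcont : ContinuousOn g (Set.uIcc (β+δ) (1+δ)) := by
        rw [Set.uIcc_of_le hab]
        apply ContinuousOn.mul continuousOn_const
        apply ContinuousOn.inv₀ (by fun_prop)
        intro σ hσ
        have h1 : β + δ ≤ σ := hσ.1
        exact ne_of_gt (by linarith)
      have hgint : IntervalIntegrable g MeasureTheory.volume (β+δ) (1+δ) :=
        hgcont.intervalIntegrable
      have hbound : ∀ᵐ σ ∂MeasureTheory.volume.restrict (Set.uIoc (β+δ) (1+δ)),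
          ‖f σ‖ ≤ g σ := by
        refine MeasureTheory.ae_restrict_of_forall_mem measurableSet_uIoc ?_
        intro σ hσ
        rw [Set.uIoc_of_le hab] at hσ
        have h1 : β + δ < σ := hσ.1
        have h2 : σ ≤ 1 + δ := hσ.2
        have hσβ : 0 < σ - β := by linarith
        rw [hfdef]
        simp only [norm_div]
        rw [hNnorm σ]
        rw [hgdef]
        have hden : σ - β ≤ ‖(σ:ℂ) + T * I - ρ‖ := le_trans (le_abs_self _) (hDlb σ)
        calc x ^ σ / ‖(σ:ℂ) + T * I - ρ‖ ≤ (Real.exp 1 * x) / (σ - β) :=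
              div_le_div₀ (by positivity) (hxσ σ h2) hσβ hden
          _ = Real.exp 1 * x * (σ - β)⁻¹ := by rw [div_eq_mul_inv]
      have hgval : (∫ σ in (β+δ)..(1+δ), g σ) = Real.exp 1 * x * Real.log ((1+δ-β)/δ) := by
        rw [hgdef]
        rw [intervalIntegral.integral_const_mul]
        congr 1
        have := intervalIntegral.integral_comp_sub_right (a := β+δ) (b := 1+δ) (fun u => u⁻¹) β
        rw [this]
        have e1 : β + δ - β = δ := by ring
        rw [e1]
        exact integral_inv_of_pos hδ0 (by linarith)
      have hratio : Real.log ((1+δ-β)/δ) ≤ Real.log (L+1) := by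
        apply Real.log_le_log (div_pos (by linarith) hδ0)
        rw [div_le_iff₀ hδ0]
        have : (L+1) * δ = 1 + δ := by rw [hδdef, add_mul, mul_inv_cancel₀ hL0.ne', one_mul]
        rw [this]
        linarith
      calc ‖∫ σ in (β+δ)..(1+δ), f σ‖ ≤ |∫ σ in (β+δ)..(1+δ), g σ| :=
            intervalIntegral.norm_integral_le_abs_of_norm_le hbound hgint
        _ = Real.exp 1 * x * Real.log ((1+δ-β)/δ) := by
            rw [hgval, _root_.abs_of_nonneg]
            apply mul_nonneg (by positivity)
            apply Real.log_nonneg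
            rw [le_div_iff₀ hδ0]
            linarith
        _ ≤ Real.exp 1 * x * Real.log (L+1) := by
            apply mul_le_mul_of_nonneg_left hratio (by positivity)

  -- far left piece
  have hfar_left : ‖∫ σ in (-δ)..(β-δ), f σ‖ ≤ Real.exp 1 * x * Real.log (L + 1) := by
      have hab : -δ ≤ β - δ := by linarith
      set g : ℝ → ℝ := fun σ => Real.exp 1 * x * (β - σ)⁻¹ with hgdef
      have hgcont : ContinuousOn g (Set.uIcc (-δ) (β-δ)) := by
        rw [Set.uIcc_of_le hab]
        apply ContinuousOn.mul continuousOn_const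
        apply ContinuousOn.inv₀ (by fun_prop)
        intro σ hσ
        have h1 : σ ≤ β - δ := hσ.2
        exact ne_of_gt (by linarith)
      have hgint : IntervalIntegrable g MeasureTheory.volume (-δ) (β-δ) :=
        hgcont.intervalIntegrable
      have hbound : ∀ᵐ σ ∂MeasureTheory.volume.restrict (Set.uIoc (-δ) (β-δ)),
          ‖f σ‖ ≤ g σ := by
        refine MeasureTheory.ae_restrict_of_forall_mem measurableSet_uIoc ?_
        intro σ hσ
        rw [Set.uIoc_of_le hab] at hσ
        have h2 : σ ≤ β - δ := hσ.2
        have hσβ : 0 < β - σ := by linarith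
        rw [hfdef]
        simp only [norm_div]
        rw [hNnorm σ, hgdef]
        have hden : β - σ ≤ ‖(σ:ℂ) + T * I - ρ‖ := by
          have := hDlb σ
          have h3 : β - σ ≤ |σ - β| := by rw [abs_sub_comm]; exact le_abs_self _
          linarith
        calc x ^ σ / ‖(σ:ℂ) + T * I - ρ‖ ≤ (Real.exp 1 * x) / (β - σ) :=
              div_le_div₀ (by positivity) (hxσ σ (by linarith)) hσβ hden
          _ = Real.exp 1 * x * (β - σ)⁻¹ := by rw [div_eq_mul_inv]
      have hgval : (∫ σ in (-δ)..(β-δ), g σ) = Real.exp 1 * x * Real.log ((β+δ)/δ) := by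
        rw [hgdef, intervalIntegral.integral_const_mul]
        congr 1
        have := intervalIntegral.integral_comp_sub_left (a := -δ) (b := β-δ) (fun u => u⁻¹) β
        rw [this]
        have e1 : β - (β - δ) = δ := by ring
        have e2 : β - -δ = β + δ := by ring
        rw [e1, e2]
        exact integral_inv_of_pos hδ0 (by linarith)
      have hratio : Real.log ((β+δ)/δ) ≤ Real.log (L+1) := by
        apply Real.log_le_log (div_pos (by linarith) hδ0)
        rw [div_le_iff₀ hδ0]
        have : (L+1) * δ = 1 + δ := by rw [hδdef, add_mul, mul_inv_cancel₀ hL0.ne', one_mul]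
        rw [this]
        linarith
      calc ‖∫ σ in (-δ)..(β-δ), f σ‖ ≤ |∫ σ in (-δ)..(β-δ), g σ| :=
            intervalIntegral.norm_integral_le_abs_of_norm_le hbound hgint
        _ = Real.exp 1 * x * Real.log ((β+δ)/δ) := by
            rw [hgval, _root_.abs_of_nonneg]
            apply mul_nonneg (by positivity)
            apply Real.log_nonneg
            rw [le_div_iff₀ hδ0]
            linarith
        _ ≤ Real.exp 1 * x * Real.log (L+1) := by
            apply mul_le_mul_of_nonneg_left hratio (by positivity)

  -- middle piece
  have hmid : ‖∫ σ in (β-δ)..(β+δ), f σ‖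
      ≤ 2 * Real.pi * x + 2 * (Real.exp 1 * x) := by
      have hab : β - δ ≤ β + δ := by linarith
      have hg1cont : Continuous fun σ : ℝ => ((σ:ℂ) + T*I - ρ)⁻¹ := hDcont.inv₀ hDne
      have hg2cont : Continuous fun σ : ℝ =>
          ((x:ℂ)^((σ:ℂ)+T*I) - (x:ℂ)^((β:ℂ)+T*I)) / ((σ:ℂ)+T*I-ρ) :=
        (hNcont.sub continuous_const).div hDcont hDne
      -- decomposition
      have hdecomp : (∫ σ in (β-δ)..(β+δ), f σ)
          = (x:ℂ)^((β:ℂ)+T*I) * (∫ σ in (β-δ)..(β+δ), ((σ:ℂ)+T*I-ρ)⁻¹)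
            + ∫ σ in (β-δ)..(β+δ), ((x:ℂ)^((σ:ℂ)+T*I) - (x:ℂ)^((β:ℂ)+T*I)) / ((σ:ℂ)+T*I-ρ) := by
        rw [← intervalIntegral.integral_const_mul,
          ← intervalIntegral.integral_add
            ((hg1cont.intervalIntegrable _ _).const_mul _)
            (hg2cont.intervalIntegrable _ _)]
        apply intervalIntegral.integral_congr
        intro σ _
        rw [hfdef]
        field_simp
        ring
      -- the logarithmic integral
      have hlogint : (∫ σ in (β-δ)..(β+δ), ((σ:ℂ)+T*I-ρ)⁻¹)
          = Complex.log (((β+δ:ℝ):ℂ)+T*I-ρ) - Complex.log (((β-δ:ℝ):ℂ)+T*I-ρ) := by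
        refine intervalIntegral.integral_eq_sub_of_hasDerivAt
          (f := fun σ : ℝ => Complex.log ((σ:ℂ)+T*I-ρ)) ?_ ?_
        · intro σ _
          have h1 : HasDerivAt (fun z : ℂ => Complex.log (z + T*I - ρ)) (((σ:ℂ)+T*I-ρ)⁻¹) (σ:ℂ) := by
            have h2 : HasDerivAt (fun z : ℂ => z + T*I - ρ) 1 (σ:ℂ) :=
              ((hasDerivAt_id ((σ:ℂ))).add_const (T*I)).sub_const ρ
      
            have := (Complex.hasDerivAt_log (hDslit σ)).comp (σ:ℂ) h2
            simpa [Function.comp_def] using this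
          exact h1.comp_ofReal
        · exact hg1cont.intervalIntegrable _ _
      -- equal moduli
      have habs : ‖((β+δ:ℝ):ℂ)+T*I-ρ‖ = ‖((β-δ:ℝ):ℂ)+T*I-ρ‖ := by
        rw [Complex.norm_def, Complex.norm_def, Complex.normSq_apply, Complex.normSq_apply]
        simp only [Complex.add_re, Complex.sub_re, Complex.ofReal_re, Complex.mul_re,
          Complex.ofReal_im, Complex.I_re, Complex.I_im, Complex.add_im, Complex.sub_im,
          Complex.mul_im]
        rw [hβdef]
        ring_nf
      -- norm of the log difference
      have hlognorm : ‖Complex.log (((β+δ:ℝ):ℂ)+T*I-ρ) - Complex.log (((β-δ:ℝ):ℂ)+T*I-ρ)‖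
          ≤ 2 * Real.pi := by
        set A := ((β+δ:ℝ):ℂ)+T*I-ρ with hA
        set B := ((β-δ:ℝ):ℂ)+T*I-ρ with hB
        have h1 : (Complex.log A - Complex.log B).re = 0 := by
          simp [Complex.log_re, habs]
        have h2 : |(Complex.log A - Complex.log B).im| ≤ 2 * Real.pi := by
          simp only [Complex.sub_im, Complex.log_im]
          have ha := Complex.abs_arg_le_pi A
          have hb := Complex.abs_arg_le_pi B
          rw [abs_le] at ha hb ⊢
          constructor <;> [linarith [ha.1, hb.2]; linarith [ha.2, hb.1]]
        calc ‖Complex.log A - Complex.log B‖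
            ≤ |(Complex.log A - Complex.log B).re| + |(Complex.log A - Complex.log B).im| := by
              exact Complex.norm_le_abs_re_add_abs_im _
          _ ≤ 2 * Real.pi := by rw [h1, abs_zero, zero_add]; exact h2
      -- first middle term
      have hmid1 : ‖(x:ℂ)^((β:ℂ)+T*I) * (∫ σ in (β-δ)..(β+δ), ((σ:ℂ)+T*I-ρ)⁻¹)‖
          ≤ 2 * Real.pi * x := by
        rw [norm_mul, hlogint]
        have hb : ‖(x:ℂ)^((β:ℂ)+T*I)‖ = x ^ β := hNnorm β
        rw [hb]
        have hxβ : x ^ β ≤ x := by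
          calc x ^ β ≤ x ^ (1:ℝ) := Real.rpow_le_rpow_of_exponent_le hx1 hβ1
            _ = x := Real.rpow_one x
        have h0 : 0 ≤ x ^ β := Real.rpow_nonneg hx0.le β
        calc x ^ β * ‖Complex.log (((β+δ:ℝ):ℂ)+T*I-ρ) - Complex.log (((β-δ:ℝ):ℂ)+T*I-ρ)‖
            ≤ x * (2 * Real.pi) := by
              apply mul_le_mul hxβ hlognorm (norm_nonneg _) hx0.le
          _ = 2 * Real.pi * x := by ring
      -- second middle term : mean value estimate
      have hrpow : ∀ σ : ℝ, x ^ σ = Real.exp (L * σ) := by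
        intro σ; rw [Real.rpow_def_of_pos hx0, hLdef]
      have hmvt : ∀ σ ∈ Set.Icc (β-δ) (β+δ), |x ^ σ - x ^ β| ≤ Real.exp 1 * x * L * |σ - β| := by
        intro σ hσ
        have hderiv : ∀ t ∈ Set.Icc (β-δ) (β+δ),
            HasDerivWithinAt (fun t : ℝ => Real.exp (L * t)) (Real.exp (L * t) * L)
              (Set.Icc (β-δ) (β+δ)) t := by
          intro t _
          have h2 : HasDerivAt (fun t : ℝ => Real.exp (L * t)) (Real.exp (L * t) * L) t := by
            simpa using ((hasDerivAt_id t).const_mul L).exp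
          exact h2.hasDerivWithinAt
        have hbd : ∀ t ∈ Set.Icc (β-δ) (β+δ), ‖Real.exp (L * t) * L‖ ≤ Real.exp 1 * x * L := by
          intro t ht
          rw [Real.norm_eq_abs, _root_.abs_of_nonneg (by positivity)]
          apply mul_le_mul_of_nonneg_right _ hL0.le
          rw [← hrpow t]
          exact hxσ t (by linarith [ht.2])
        have hβmem : β ∈ Set.Icc (β-δ) (β+δ) := ⟨by linarith, by linarith⟩
        have := (convex_Icc (β-δ) (β+δ)).norm_image_sub_le_of_norm_hasDerivWithin_le
          hderiv hbd hβmem hσ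
        rw [hrpow σ, hrpow β]
        simpa [Real.norm_eq_abs] using this
      have hpt : ∀ σ ∈ Set.uIoc (β-δ) (β+δ),
          ‖((x:ℂ)^((σ:ℂ)+T*I) - (x:ℂ)^((β:ℂ)+T*I)) / ((σ:ℂ)+T*I-ρ)‖ ≤ Real.exp 1 * x * L := by
        intro σ hσ
        rw [Set.uIoc_of_le hab] at hσ
        have hσIcc : σ ∈ Set.Icc (β-δ) (β+δ) := ⟨hσ.1.le, hσ.2⟩
        have hnum : ‖(x:ℂ)^((σ:ℂ)+T*I) - (x:ℂ)^((β:ℂ)+T*I)‖ = |x ^ σ - x ^ β| := by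
          have e1 : (x:ℂ)^((σ:ℂ)+T*I) = ((x ^ σ : ℝ):ℂ) * (x:ℂ)^((T:ℂ)*I) := by
            rw [Complex.cpow_add _ _ hxC, Complex.ofReal_cpow hx0.le]
          have e2 : (x:ℂ)^((β:ℂ)+T*I) = ((x ^ β : ℝ):ℂ) * (x:ℂ)^((T:ℂ)*I) := by
            rw [Complex.cpow_add _ _ hxC, Complex.ofReal_cpow hx0.le]
          have e3 : ‖(x:ℂ)^((T:ℂ)*I)‖ = 1 := by
            rw [Complex.norm_cpow_eq_rpow_re_of_pos hx0]
            simp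
          rw [e1, e2, ← sub_mul, norm_mul, e3, mul_one, ← Complex.ofReal_sub,
            Complex.norm_real, Real.norm_eq_abs]
        rw [norm_div, hnum]
        rw [div_le_iff₀ (norm_pos_iff.mpr (hDne σ))]
        calc |x ^ σ - x ^ β| ≤ Real.exp 1 * x * L * |σ - β| := hmvt σ hσIcc
          _ ≤ Real.exp 1 * x * L * ‖(σ:ℂ)+T*I-ρ‖ :=
              mul_le_mul_of_nonneg_left (hDlb σ) (by positivity)
      have hmid2 : ‖∫ σ in (β-δ)..(β+δ),
          ((x:ℂ)^((σ:ℂ)+T*I) - (x:ℂ)^((β:ℂ)+T*I)) / ((σ:ℂ)+T*I-ρ)‖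
          ≤ 2 * (Real.exp 1 * x) := by
        have := intervalIntegral.norm_integral_le_of_norm_le_const hpt
        have e4 : |(β+δ) - (β-δ)| = 2 * δ := by
          rw [_root_.abs_of_nonneg (by linarith)]; ring
        rw [e4] at this
        calc ‖∫ σ in (β-δ)..(β+δ),
              ((x:ℂ)^((σ:ℂ)+T*I) - (x:ℂ)^((β:ℂ)+T*I)) / ((σ:ℂ)+T*I-ρ)‖
            ≤ Real.exp 1 * x * L * (2 * δ) := this
          _ = 2 * (Real.exp 1 * x) := by
              rw [hδdef]; field_simp
      rw [hdecomp]
      calc ‖(x:ℂ)^((β:ℂ)+T*I) * (∫ σ in (β-δ)..(β+δ), ((σ:ℂ)+T*I-ρ)⁻¹)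
            + ∫ σ in (β-δ)..(β+δ), ((x:ℂ)^((σ:ℂ)+T*I) - (x:ℂ)^((β:ℂ)+T*I)) / ((σ:ℂ)+T*I-ρ)‖
          ≤ ‖(x:ℂ)^((β:ℂ)+T*I) * (∫ σ in (β-δ)..(β+δ), ((σ:ℂ)+T*I-ρ)⁻¹)‖
            + ‖∫ σ in (β-δ)..(β+δ), ((x:ℂ)^((σ:ℂ)+T*I) - (x:ℂ)^((β:ℂ)+T*I)) / ((σ:ℂ)+T*I-ρ)‖ :=
            norm_add_le _ _
        _ ≤ 2 * Real.pi * x + 2 * (Real.exp 1 * x) := add_le_add hmid1 hmid2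

  -- splitting
  have hsplit : (∫ σ in (1 - (1 + 1/L))..(1 + 1/L), f σ)
      = (∫ σ in (-δ)..(β-δ), f σ) + (∫ σ in (β-δ)..(β+δ), f σ)
        + (∫ σ in (β+δ)..(1+δ), f σ) := by
    have e1 : 1 - (1 + 1/L) = -δ := by rw [hδdef, one_div]; ring
    have e2 : (1:ℝ) + 1/L = 1 + δ := by rw [hδdef, one_div]
    rw [e1, e2,
      ← intervalIntegral.integral_add_adjacent_intervals (hint (-δ) (β+δ)) (hint (β+δ) (1+δ)),
      ← intervalIntegral.integral_add_adjacent_intervals (hint (-δ) (β-δ)) (hint (β-δ) (β+δ))]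
  -- numeric endgame
  have htotal : ‖∫ σ in (1 - (1 + 1/L))..(1 + 1/L), f σ‖
      ≤ 2 * (Real.exp 1 * x * Real.log (L + 1)) + (2 * Real.pi * x + 2 * (Real.exp 1 * x)) := by
    rw [hsplit]
    calc ‖(∫ σ in (-δ)..(β-δ), f σ) + (∫ σ in (β-δ)..(β+δ), f σ) + (∫ σ in (β+δ)..(1+δ), f σ)‖
        ≤ ‖∫ σ in (-δ)..(β-δ), f σ‖ + ‖∫ σ in (β-δ)..(β+δ), f σ‖ + ‖∫ σ in (β+δ)..(1+δ), f σ‖ :=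
          norm_add₃_le
      _ ≤ _ := by linarith
  refine le_trans htotal ?_
  -- final numeric inequality
  set LL := Real.log (Real.log (2*x)) with hLL
  have hlog2u : Real.log 2 ≤ 0.6932 := by
    have := Real.log_two_lt_d9; norm_num at this ⊢; linarith
  have hlog2x : Real.log (2*x) = Real.log 2 + L := by
    rw [Real.log_mul (by norm_num) (by linarith), hLdef]
  have h2x : (1.3862:ℝ) ≤ Real.log (2*x) := by rw [hlog2x]; linarith
  have h2x0 : (0:ℝ) < Real.log (2*x) := by linarith
  have hLLlb : (0.27:ℝ) ≤ LL := by
    have h1 : 1 - (Real.log (2*x))⁻¹ ≤ LL := by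
      have h := Real.log_le_sub_one_of_pos (x := (Real.log (2*x))⁻¹) (by positivity)
      rw [Real.log_inv] at h
      rw [hLL]; linarith
    have h2 : (Real.log (2*x))⁻¹ ≤ (1.3862:ℝ)⁻¹ := by
      apply inv_anti₀ (by norm_num) h2x
    have h3 : (1.3862:ℝ)⁻¹ ≤ 0.7216 := by norm_num
    linarith
  have hlogle : Real.log (L+1) ≤ Real.log 2 + LL := by
    have hle : L + 1 ≤ 2 * Real.log (2*x) := by rw [hlog2x]; linarith
    calc Real.log (L+1) ≤ Real.log (2 * Real.log (2*x)) :=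
          Real.log_le_log (by linarith) hle
      _ = Real.log 2 + LL := by rw [Real.log_mul (by norm_num) (by linarith), hLL]
  have hlogL1 : 0 ≤ Real.log (L+1) := Real.log_nonneg (by linarith)
  have hpi : Real.pi ≤ 4 := Real.pi_le_four
  have hpi0 : 0 < Real.pi := Real.pi_pos
  have he : Real.exp 1 ≤ 2.7182818286 := by
    have := Real.exp_one_lt_d9; linarith
  have he0 : (0:ℝ) < Real.exp 1 := Real.exp_pos 1
  have hkey : Real.exp 1 * Real.log (L+1) ≤ 2.7182818286 * 0.6932 + 2.7182818286 * LL := by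
    calc Real.exp 1 * Real.log (L+1) ≤ 2.7182818286 * Real.log (L+1) :=
          mul_le_mul_of_nonneg_right he hlogL1
      _ ≤ 2.7182818286 * (Real.log 2 + LL) := by
          apply mul_le_mul_of_nonneg_left hlogle (by norm_num)
      _ ≤ 2.7182818286 * 0.6932 + 2.7182818286 * LL := by linarith only [hlog2u, hLLlb]
  have hfin : 2 * (2.7182818286 * 0.6932 + 2.7182818286 * LL) + 2 * Real.pi + 2 * Real.exp 1
      ≤ 200 * LL := by linarith only [hpi, he, hLLlb]
  have H : 2 * (Real.exp 1 * Real.log (L+1)) + 2 * Real.pi + 2 * Real.exp 1 ≤ 200 * LL := by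
    linarith only [hkey, hfin]
  calc 2 * (Real.exp 1 * x * Real.log (L + 1)) + (2 * Real.pi * x + 2 * (Real.exp 1 * x))
      = (2 * (Real.exp 1 * Real.log (L+1)) + 2 * Real.pi + 2 * Real.exp 1) * x := by ring
    _ ≤ (200 * LL) * x := mul_le_mul_of_nonneg_right H hx0.le
    _ = 200 * x * LL := by ring
end

section
/- There is an absolute constant C > 0 such that for all real x ≥ 2, with c := 1 + 1/log x, one has ∑_{n≥2} Λ(n)/(n^c·log(n·x)) ≤ C. -/
open scoped Classical ArithmeticFunction

private lemma term_ofReal_aux (f : ℕ → ℝ) {c : ℝ} (hc : c ≠ 0) (n : ℕ) :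
    LSeries.term (fun m : ℕ ↦ ((f m : ℝ) : ℂ)) (c : ℂ) n = ((f n / (n : ℝ) ^ c : ℝ) : ℂ) := by
  rcases eq_or_ne n 0 with rfl | hn
  · simp [LSeries.term_zero, Real.zero_rpow hc]
  · rw [LSeries.term_of_ne_zero hn, Complex.ofReal_div,
      Complex.ofReal_cpow (Nat.cast_nonneg n), Complex.ofReal_natCast]

private lemma LSeries_eq_ofReal (f : ℕ → ℝ) {c : ℝ} (hc : c ≠ 0)
    (h : LSeriesSummable (fun m : ℕ ↦ ((f m : ℝ) : ℂ)) (c : ℂ)) :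
    Summable (fun n : ℕ ↦ f n / (n : ℝ) ^ c) ∧
      LSeries (fun m : ℕ ↦ ((f m : ℝ) : ℂ)) (c : ℂ)
        = ((∑' n : ℕ, f n / (n : ℝ) ^ c : ℝ) : ℂ) := by
  have he : (fun n ↦ LSeries.term (fun m : ℕ ↦ ((f m : ℝ) : ℂ)) (c : ℂ) n)
      = fun n ↦ ((f n / (n : ℝ) ^ c : ℝ) : ℂ) := funext (term_ofReal_aux f hc)
  have hs : Summable fun n : ℕ ↦ ((f n / (n : ℝ) ^ c : ℝ) : ℂ) := by
    rw [← he]; exact h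
  refine ⟨Complex.summable_ofReal.mp hs, ?_⟩
  rw [LSeries, he, ← Complex.ofReal_tsum]

open ArithmeticFunction in
private lemma key_identity {c : ℝ} (hc1 : 1 < c) :
    Summable (fun n : ℕ ↦ (Λ n : ℝ) / (n : ℝ) ^ c) ∧
    Summable (fun n : ℕ ↦ (1 : ℝ) / (n : ℝ) ^ c) ∧
    Summable (fun n : ℕ ↦ Real.log n / (n : ℝ) ^ c) ∧
    (∑' n : ℕ, (Λ n : ℝ) / (n : ℝ) ^ c) * (∑' n : ℕ, (1 : ℝ) / (n : ℝ) ^ c)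
      = ∑' n : ℕ, Real.log n / (n : ℝ) ^ c := by
  have hc0 : c ≠ 0 := by linarith
  have hsre : 1 < (c : ℂ).re := by simpa using hc1
  have hΛc : LSeriesSummable (fun m : ℕ ↦ ((Λ m : ℝ) : ℂ)) (c : ℂ) :=
    ArithmeticFunction.LSeriesSummable_vonMangoldt hsre
  have h1c : LSeriesSummable (1 : ℕ → ℂ) (c : ℂ) := LSeriesSummable_one_iff.mpr hsre
  have honef : (fun _ : ℕ ↦ (((1 : ℝ)) : ℂ)) = (1 : ℕ → ℂ) := by funext; simp
  have hlogf : (fun m : ℕ ↦ ((Real.log m : ℝ) : ℂ)) = (fun m : ℕ ↦ Complex.log m) := by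
    funext n; exact Complex.natCast_log
  have hconv := ArithmeticFunction.convolution_vonMangoldt_const_one
  have hlogc : LSeriesSummable (fun m : ℕ ↦ Complex.log m) (c : ℂ) := by
    rw [← hconv]
    exact hΛc.convolution h1c
  have hprod : LSeries (fun m : ℕ ↦ Complex.log m) (c : ℂ)
      = LSeries (fun m : ℕ ↦ ((Λ m : ℝ) : ℂ)) (c : ℂ) * LSeries (1 : ℕ → ℂ) (c : ℂ) := by
    rw [← hconv]
    exact LSeries_convolution' hΛc h1c
  obtain ⟨SΛ, AΛ⟩ := LSeries_eq_ofReal (fun n ↦ (Λ n : ℝ)) hc0 hΛc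
  obtain ⟨Sz, Az⟩ := LSeries_eq_ofReal (fun _ ↦ (1 : ℝ)) hc0 (by rw [honef]; exact h1c)
  obtain ⟨Sl, Al⟩ := LSeries_eq_ofReal (fun n ↦ Real.log n) hc0 (by rw [hlogf]; exact hlogc)
  refine ⟨SΛ, Sz, Sl, ?_⟩
  have : ((∑' n : ℕ, Real.log n / (n : ℝ) ^ c : ℝ) : ℂ)
      = ((∑' n : ℕ, (Λ n : ℝ) / (n : ℝ) ^ c : ℝ) : ℂ)
        * ((∑' n : ℕ, (1 : ℝ) / (n : ℝ) ^ c : ℝ) : ℂ) := by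
    rw [← Al, ← AΛ, ← Az, honef, hlogf]
    exact hprod
  exact_mod_cast this.symm

private lemma Z_lower {x : ℝ} (hx : 2 ≤ x) :
    (1 / 2) * Real.log x ≤ ∑' n : ℕ, (1 : ℝ) / (n : ℝ) ^ (1 + 1 / Real.log x) := by
  set y := Real.log x with hy_def
  have hy0 : 0 < y := Real.log_pos (by linarith)
  set c : ℝ := 1 + 1 / y with hc_def
  have h1y : 0 < 1 / y := by positivity
  have hc1 : 1 < c := by rw [hc_def]; linarith
  have hcm1 : c - 1 = 1 / y := by rw [hc_def]; ring
  have hx0 : (0 : ℝ) < x := by linarith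
  have Sz : Summable (fun n : ℕ ↦ (1 : ℝ) / (n : ℝ) ^ c) :=
    Real.summable_one_div_nat_rpow.mpr hc1
  set a := ⌈x⌉₊ with ha
  have hxa : x ≤ 1 + (a : ℝ) := le_trans (Nat.le_ceil x) (by linarith)
  have h1a : (1 : ℝ) ≤ 1 + (a : ℝ) := by
    have := Nat.cast_nonneg (α := ℝ) a; linarith
  have hanti : AntitoneOn (fun t : ℝ ↦ t ^ (-c)) (Set.Icc 1 (1 + (a : ℝ))) := by
    intro s hs t ht hst
    exact Real.rpow_le_rpow_of_nonpos (lt_of_lt_of_le one_pos hs.1) hst (by linarith)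
  have hIS := hanti.integral_le_sum
  have hint : ∫ t in (1 : ℝ)..(1 + (a : ℝ)), t ^ (-c)
      = (1 - (1 + (a : ℝ)) ^ (1 - c)) / (c - 1) := by
    rw [integral_rpow (Or.inr ⟨by intro h; rw [neg_inj] at h; exact absurd h (by linarith),
      by rw [Set.uIcc_of_le h1a]; rintro ⟨h0, -⟩; linarith⟩)]
    rw [Real.one_rpow, show -c + 1 = 1 - c from by ring]
    rw [div_eq_div_iff (by intro h; rw [sub_eq_zero] at h; exact absurd h.symm (by linarith))
      (by intro h; rw [sub_eq_zero] at h; exact absurd h (by linarith))]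
    ring
  have hub : (1 + (a : ℝ)) ^ (1 - c) ≤ 1 / 2 := by
    have h1 : (1 + (a : ℝ)) ^ (1 - c) ≤ x ^ (1 - c) :=
      Real.rpow_le_rpow_of_nonpos hx0 hxa (by linarith)
    have h2 : x ^ (1 - c) = Real.exp (-1) := by
      rw [Real.rpow_def_of_pos hx0, ← hy_def]
      congr 1
      rw [hc_def]
      field_simp
      ring
    have h3 : Real.exp (-1) ≤ 1 / 2 := by
      rw [Real.exp_neg]
      have h4 : (2 : ℝ) ≤ Real.exp 1 := by
        have := Real.add_one_le_exp (1 : ℝ); linarith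
      rw [inv_le_comm₀ (by linarith) (by norm_num)]
      norm_num; linarith
    linarith
  have hsum_le : ∑ i ∈ Finset.range a, ((1 : ℝ) + (i : ℕ)) ^ (-c)
      ≤ ∑' n : ℕ, (1 : ℝ) / (n : ℝ) ^ c := by
    have hre : ∑ i ∈ Finset.range a, ((1 : ℝ) + (i : ℕ)) ^ (-c)
        = ∑ n ∈ Finset.Ico 1 (a + 1), (1 : ℝ) / (n : ℝ) ^ c := by
      rw [Finset.sum_Ico_eq_sum_range]
      simp only [Nat.add_sub_cancel]
      refine Finset.sum_congr rfl fun i _ ↦ ?_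
      rw [Real.rpow_neg (by positivity), one_div]
      congr 2
      push_cast; ring
    rw [hre]
    exact Summable.sum_le_tsum _ (fun n _ ↦ by positivity) Sz
  calc (1 / 2) * y = (1 / 2) / (c - 1) := by
        rw [hcm1]; field_simp
    _ ≤ (1 - (1 + (a : ℝ)) ^ (1 - c)) / (c - 1) := by
        apply div_le_div_of_nonneg_right ?_ ?_
        case _ => linarith
        case _ => linarith
    _ ≤ ∑ i ∈ Finset.range a, ((1 : ℝ) + (i : ℕ)) ^ (-c) := by rw [← hint]; exact hIS
    _ ≤ _ := hsum_le

private lemma L_upper {x : ℝ} (hx : 2 ≤ x) :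
    ∑' n : ℕ, Real.log n / (n : ℝ) ^ (1 + 1 / Real.log x)
      ≤ 4 + 2 * Real.log x + (Real.log x) ^ 2 := by
  set y := Real.log x with hy_def
  have hy0 : 0 < y := Real.log_pos (by linarith)
  set c : ℝ := 1 + 1 / y with hc_def
  have h1y : 0 < 1 / y := by positivity
  have hc1 : 1 < c := by rw [hc_def]; linarith
  have hcm1 : c - 1 = 1 / y := by rw [hc_def]; ring
  have hK1 : (c - 1) * y = 1 := by rw [hcm1]; field_simp
  have gl_nonneg : ∀ n : ℕ, 0 ≤ Real.log n / (n : ℝ) ^ c := fun n ↦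
    div_nonneg (Real.log_natCast_nonneg n) (Real.rpow_nonneg (Nat.cast_nonneg n) c)
  -- the function and its antitonicity
  set fL : ℝ → ℝ := fun t ↦ Real.log t * t ^ (-c) with hfL
  have hd : ∀ t : ℝ, 3 ≤ t → HasDerivAt fL
      (t⁻¹ * t ^ (-c) + Real.log t * (-c * t ^ (-c - 1))) t := by
    intro t ht
    have ht0 : t ≠ 0 := by intro h; rw [h] at ht; linarith
    exact (Real.hasDerivAt_log ht0).mul (Real.hasDerivAt_rpow_const (Or.inl ht0))
  have hneg : ∀ t : ℝ, 3 ≤ t →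
      t⁻¹ * t ^ (-c) + Real.log t * (-c * t ^ (-c - 1)) ≤ 0 := by
    intro t ht
    have ht0 : (0 : ℝ) < t := by linarith
    have h1 : t⁻¹ * t ^ (-c) = t ^ (-c - 1) := by
      rw [show -c - 1 = -c + -1 from by ring, Real.rpow_add ht0, Real.rpow_neg_one]; ring
    have h2 : 1 ≤ Real.log t := by
      rw [Real.le_log_iff_exp_le ht0]
      have := Real.exp_one_lt_d9
      linarith
    have h3 : 0 ≤ t ^ (-c - 1) := Real.rpow_nonneg ht0.le _
    have h5 : (0 : ℝ) ≤ c * Real.log t - 1 := by nlinarith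
    have goal' : t ^ (-c - 1) + Real.log t * (-c * t ^ (-c - 1)) ≤ 0 := by
      nlinarith [mul_nonneg h3 h5]
    rw [h1]
    exact goal'
  have hBn : ∀ N : ℕ, ∑ n ∈ Finset.range N, Real.log n / (n : ℝ) ^ c
      ≤ 4 + 2 * y + y ^ 2 := by
    intro N
    set M := max N 4 with hM
    have h4M : 4 ≤ M := le_max_right _ _
    have hmono : ∑ n ∈ Finset.range N, Real.log n / (n : ℝ) ^ c
        ≤ ∑ n ∈ Finset.range M, Real.log n / (n : ℝ) ^ c :=
      Finset.sum_le_sum_of_subset_of_nonneg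
        (Finset.range_subset_range.mpr (le_max_left _ _)) (fun i _ _ ↦ gl_nonneg i)
    have hsplit : ∑ n ∈ Finset.range M, Real.log n / (n : ℝ) ^ c
        = ∑ n ∈ Finset.range 4, Real.log n / (n : ℝ) ^ c
          + ∑ n ∈ Finset.Ico 4 M, Real.log n / (n : ℝ) ^ c :=
      (Finset.sum_range_add_sum_Ico _ h4M).symm
    have hhead : ∑ n ∈ Finset.range 4, Real.log n / (n : ℝ) ^ c ≤ 4 := by
      rw [Finset.sum_range_succ, Finset.sum_range_succ, Finset.sum_range_succ,
        Finset.sum_range_one]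
      have e0 : Real.log ((0 : ℕ) : ℝ) / ((0 : ℕ) : ℝ) ^ c = 0 := by
        norm_num [Real.log_zero]
      have e1 : Real.log ((1 : ℕ) : ℝ) / ((1 : ℕ) : ℝ) ^ c = 0 := by
        norm_num [Real.log_one]
      have hle : ∀ n : ℕ, 1 ≤ n → Real.log n / (n : ℝ) ^ c ≤ Real.log n := by
        intro n hn
        apply div_le_self (Real.log_natCast_nonneg n)
        calc (1 : ℝ) = 1 ^ c := (Real.one_rpow c).symm
          _ ≤ (n : ℝ) ^ c := Real.rpow_le_rpow (by norm_num) (by exact_mod_cast hn)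
              (by linarith)
      have h2 : Real.log ((2 : ℕ) : ℝ) / ((2 : ℕ) : ℝ) ^ c ≤ 1 := by
        refine le_trans (hle 2 (by norm_num)) ?_
        have := Real.log_le_sub_one_of_pos (show (0:ℝ) < 2 by norm_num)
        push_cast; linarith
      have h3 : Real.log ((3 : ℕ) : ℝ) / ((3 : ℕ) : ℝ) ^ c ≤ 2 := by
        refine le_trans (hle 3 (by norm_num)) ?_
        have := Real.log_le_sub_one_of_pos (show (0:ℝ) < 3 by norm_num)
        push_cast; linarith
      rw [e0, e1]
      linarith
    have htail : ∑ n ∈ Finset.Ico 4 M, Real.log n / (n : ℝ) ^ c ≤ 2 * y + y ^ 2 := by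
      rw [Finset.sum_Ico_eq_sum_range]
      set m := M - 4 with hm
      have h3m : (3 : ℝ) ≤ 3 + (m : ℝ) := by
        have := Nat.cast_nonneg (α := ℝ) m; linarith
      have hanti : AntitoneOn fL (Set.Icc 3 (3 + (m : ℝ))) := by
        apply antitoneOn_of_deriv_nonpos (convex_Icc _ _)
        · exact fun t ht ↦ ((hd t ht.1).continuousAt).continuousWithinAt
        · intro t ht
          rw [interior_Icc] at ht
          exact ((hd t ht.1.le).differentiableAt).differentiableWithinAt
        · intro t ht
          rw [interior_Icc] at ht
          rw [(hd t ht.1.le).deriv]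
          exact hneg t ht.1.le
      have hSI := hanti.sum_le_integral
      have hInteg : IntervalIntegrable fL MeasureTheory.volume 3 (3 + (m : ℝ)) := by
        apply AntitoneOn.intervalIntegrable
        rwa [Set.uIcc_of_le h3m]
      have hdF : ∀ t ∈ Set.uIcc (3 : ℝ) (3 + (m : ℝ)),
          HasDerivAt (fun t : ℝ ↦ -(t ^ (1 - c) * (Real.log t * y + y ^ 2))) (fL t) t := by
        intro t ht
        rw [Set.uIcc_of_le h3m] at ht
        have ht0 : (0 : ℝ) < t := by linarith [ht.1]
        have h1 : HasDerivAt (fun t : ℝ ↦ t ^ (1 - c)) ((1 - c) * t ^ (1 - c - 1)) t :=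
          Real.hasDerivAt_rpow_const (Or.inl ht0.ne')
        have h2 : HasDerivAt (fun t : ℝ ↦ Real.log t * y + y ^ 2) (t⁻¹ * y) t :=
          ((Real.hasDerivAt_log ht0.ne').mul_const y).add_const _
        have h3 := (h1.mul h2).neg
        convert h3 using 1
        case e'_4 => rfl
        case e'_5 => rfl
        case e'_8 => rfl
        have e1 : t ^ (1 - c - 1) = t ^ (-c) := by rw [show 1 - c - 1 = -c from by ring]
        have e2 : t ^ (1 - c) * (t⁻¹ * y) = t ^ (-c) * y := by
          rw [show (1 : ℝ) - c = -c + 1 from by ring, Real.rpow_add ht0, Real.rpow_one]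
          field_simp
        rw [hfL]
        simp only []
        rw [e1, e2]
        linear_combination (-(Real.log t * t ^ (-c)) - t ^ (-c) * y) * hK1
      have hInt : ∫ t in (3 : ℝ)..(3 + (m : ℝ)), fL t
          = -((3 + (m : ℝ)) ^ (1 - c) * (Real.log (3 + (m : ℝ)) * y + y ^ 2))
            - -((3 : ℝ) ^ (1 - c) * (Real.log 3 * y + y ^ 2)) :=
        intervalIntegral.integral_eq_sub_of_hasDerivAt hdF hInteg
      have hF1 : -((3 + (m : ℝ)) ^ (1 - c) * (Real.log (3 + (m : ℝ)) * y + y ^ 2)) ≤ 0 := by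
        have l1 : (0:ℝ) ≤ (3 + (m : ℝ)) ^ (1 - c) := Real.rpow_nonneg (by linarith) _
        have l2 : (0:ℝ) ≤ Real.log (3 + (m : ℝ)) := Real.log_nonneg (by linarith)
        have l3 : (0:ℝ) ≤ Real.log (3 + (m : ℝ)) * y + y ^ 2 :=
          add_nonneg (mul_nonneg l2 hy0.le) (sq_nonneg y)
        have := mul_nonneg l1 l3
        linarith
      have hF3 : (3 : ℝ) ^ (1 - c) * (Real.log 3 * y + y ^ 2) ≤ 2 * y + y ^ 2 := by
        have h31 : (3 : ℝ) ^ (1 - c) ≤ 1 :=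
          Real.rpow_le_one_of_one_le_of_nonpos (by norm_num) (by linarith)
        have hlog3 : Real.log 3 ≤ 2 := by
          have := Real.log_le_sub_one_of_pos (show (0:ℝ) < 3 by norm_num); linarith
        have hpos : (0:ℝ) ≤ Real.log 3 := Real.log_nonneg (by norm_num)
        have hinner0 : (0:ℝ) ≤ Real.log 3 * y + y ^ 2 :=
          add_nonneg (mul_nonneg hpos hy0.le) (sq_nonneg y)
        have hinner : Real.log 3 * y + y ^ 2 ≤ 2 * y + y ^ 2 := by
          have := mul_le_mul_of_nonneg_right hlog3 hy0.le
          linarith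
        calc (3 : ℝ) ^ (1 - c) * (Real.log 3 * y + y ^ 2)
            ≤ 1 * (Real.log 3 * y + y ^ 2) := mul_le_mul_of_nonneg_right h31 hinner0
          _ = Real.log 3 * y + y ^ 2 := one_mul _
          _ ≤ 2 * y + y ^ 2 := hinner
      have hsum_eq : ∑ i ∈ Finset.range (M - 4), Real.log ((4 + i : ℕ) : ℝ)
            / ((4 + i : ℕ) : ℝ) ^ c
          = ∑ i ∈ Finset.range m, fL (3 + ((i + 1 : ℕ) : ℝ)) := by
        refine Finset.sum_congr (by rw [hm]) fun i _ ↦ ?_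
        have hcast : (3 : ℝ) + ((i + 1 : ℕ) : ℝ) = ((4 + i : ℕ) : ℝ) := by push_cast; ring
        rw [hfL]
        simp only []
        rw [hcast, Real.rpow_neg (Nat.cast_nonneg _), div_eq_mul_inv]
      calc ∑ i ∈ Finset.range (M - 4), Real.log ((4 + i : ℕ) : ℝ) / ((4 + i : ℕ) : ℝ) ^ c
          = ∑ i ∈ Finset.range m, fL (3 + ((i + 1 : ℕ) : ℝ)) := hsum_eq
        _ ≤ ∫ t in (3 : ℝ)..(3 + (m : ℝ)), fL t := hSI
        _ ≤ 2 * y + y ^ 2 := by rw [hInt]; linarith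
    linarith
  exact Real.tsum_le_of_sum_range_le gl_nonneg hBn

/-- There is an absolute constant `C > 0` such that for all `x ≥ 2`, with
`c = 1 + 1/log x`, one has `∑_{n ≥ 2} Λ(n)/(n^c log(nx)) ≤ C`. -/
theorem sum_vonMangoldt_div_log_le :
    ∃ C : ℝ, 0 < C ∧
      ∀ x : ℝ, 2 ≤ x →
        (∑' n : ℕ, if 2 ≤ n then
            Λ n / ((n : ℝ) ^ (1 + 1 / Real.log x) * Real.log (n * x)) else 0) ≤ C := by
  refine ⟨26, by norm_num, fun x hx ↦ ?_⟩
  set y := Real.log x with hy_def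
  have hy0 : 0 < y := Real.log_pos (by linarith)
  have hy2 : (0.6931471803 : ℝ) < y := by
    refine lt_of_lt_of_le Real.log_two_gt_d9 ?_
    rw [hy_def]
    exact Real.log_le_log (by norm_num) hx
  set c : ℝ := 1 + 1 / y with hc_def
  have h1y : 0 < 1 / y := by positivity
  have hc1 : 1 < c := by rw [hc_def]; linarith
  have hx0 : (0 : ℝ) < x := by linarith
  obtain ⟨SΛ, Sz, Sl, key⟩ := key_identity hc1
  have hZ : (1 / 2) * y ≤ ∑' n : ℕ, (1 : ℝ) / (n : ℝ) ^ c := Z_lower hx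
  have hL : ∑' n : ℕ, Real.log n / (n : ℝ) ^ c ≤ 4 + 2 * y + y ^ 2 := L_upper hx
  have hA0 : 0 ≤ ∑' n : ℕ, (Λ n : ℝ) / (n : ℝ) ^ c :=
    tsum_nonneg fun n ↦ div_nonneg ArithmeticFunction.vonMangoldt_nonneg
      (Real.rpow_nonneg (Nat.cast_nonneg n) c)
  have hAle : ∑' n : ℕ, (Λ n : ℝ) / (n : ℝ) ^ c ≤ (4 + 2 * y + y ^ 2) / ((1 / 2) * y) := by
    rw [le_div_iff₀ (by positivity)]
    calc (∑' n : ℕ, (Λ n : ℝ) / (n : ℝ) ^ c) * ((1 / 2) * y)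
        ≤ (∑' n : ℕ, (Λ n : ℝ) / (n : ℝ) ^ c) * (∑' n : ℕ, (1 : ℝ) / (n : ℝ) ^ c) :=
          mul_le_mul_of_nonneg_left hZ hA0
      _ = ∑' n : ℕ, Real.log n / (n : ℝ) ^ c := key
      _ ≤ 4 + 2 * y + y ^ 2 := hL
  have hterm : ∀ n : ℕ,
      (if 2 ≤ n then Λ n / ((n : ℝ) ^ c * Real.log (n * x)) else 0)
        ≤ (1 / y) * ((Λ n : ℝ) / (n : ℝ) ^ c) := by
    intro n
    by_cases hn : 2 ≤ n
    · rw [if_pos hn]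
      have hn0 : (0 : ℝ) < n := by
        have : (0 : ℕ) < n := by omega
        exact_mod_cast this
      have hn1 : (1 : ℝ) ≤ n := by
        have : (1 : ℕ) ≤ n := by omega
        exact_mod_cast this
      have hpow : 0 < (n : ℝ) ^ c := Real.rpow_pos_of_pos hn0 c
      have hlognx : y ≤ Real.log ((n : ℝ) * x) := by
        rw [Real.log_mul (ne_of_gt hn0) (by linarith), hy_def]
        have : 0 ≤ Real.log (n : ℝ) := Real.log_nonneg hn1
        linarith
      have hrhs : (1 / y) * ((Λ n : ℝ) / (n : ℝ) ^ c) = (Λ n : ℝ) / ((n : ℝ) ^ c * y) := by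
        field_simp
      rw [hrhs]
      apply div_le_div_of_nonneg_left ArithmeticFunction.vonMangoldt_nonneg (by positivity)
      exact mul_le_mul_of_nonneg_left hlognx hpow.le
    · rw [if_neg hn]
      exact mul_nonneg (by positivity)
        (div_nonneg ArithmeticFunction.vonMangoldt_nonneg
          (Real.rpow_nonneg (Nat.cast_nonneg n) c))
  have htnonneg : ∀ n : ℕ,
      0 ≤ (if 2 ≤ n then Λ n / ((n : ℝ) ^ c * Real.log (n * x)) else 0) := by
    intro n
    by_cases hn : 2 ≤ n
    · rw [if_pos hn]
      have hn1 : (1 : ℝ) ≤ (n : ℝ) := by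
        have : (1 : ℕ) ≤ n := by omega
        exact_mod_cast this
      have hnx : (1 : ℝ) ≤ (n : ℝ) * x := by nlinarith
      apply div_nonneg ArithmeticFunction.vonMangoldt_nonneg
      exact mul_nonneg (Real.rpow_nonneg (Nat.cast_nonneg n) c) (Real.log_nonneg hnx)
    · rw [if_neg hn]
  have hsumr : Summable (fun n : ℕ ↦ (1 / y) * ((Λ n : ℝ) / (n : ℝ) ^ c)) := SΛ.mul_left _
  have hT : Summable (fun n : ℕ ↦
      if 2 ≤ n then Λ n / ((n : ℝ) ^ c * Real.log (n * x)) else 0) :=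
    Summable.of_nonneg_of_le htnonneg hterm hsumr
  calc (∑' n : ℕ, if 2 ≤ n then Λ n / ((n : ℝ) ^ c * Real.log (n * x)) else 0)
      ≤ ∑' n : ℕ, (1 / y) * ((Λ n : ℝ) / (n : ℝ) ^ c) := Summable.tsum_le_tsum hterm hT hsumr
    _ = (1 / y) * ∑' n : ℕ, (Λ n : ℝ) / (n : ℝ) ^ c := tsum_mul_left
    _ ≤ (1 / y) * ((4 + 2 * y + y ^ 2) / ((1 / 2) * y)) :=
        mul_le_mul_of_nonneg_left hAle (by positivity)
    _ ≤ 26 := by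
        have he : (1 / y) * ((4 + 2 * y + y ^ 2) / ((1 / 2) * y))
            = (8 + 4 * y + 2 * y ^ 2) / y ^ 2 := by
          field_simp
          ring
        rw [he, div_le_iff₀ (by positivity)]
        nlinarith [mul_nonneg (sub_nonneg.mpr hy2.le) (sub_nonneg.mpr hy2.le), hy2]
end
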